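/- Let P, Q be Borel probability measures on ℝ with finite second moments. Then the squared 2-Wasserstein distance between P and Q equals ∫₀¹ (F_P←(x) − F_Q←(x))² dx, where F_P← and F_Q← are the left generalized inverses of the cdfs; moreover replacing either generalized inverse by its right-continuous version does not change the value of the integral. -/

import Mathlib

open MeasureTheory Set Filter Topology ProbabilityTheory

/-- cdf of a Borel measure on ℝ. -/
noncomputable def mcdf (P : Measure ℝ) (t : ℝ) : ℝ := (P (Set.Iic t)).toReal

/-- Left generalized inverse (generalized quantile function). -/
noncomputable def leftInv (F : ℝ → ℝ) (a : ℝ) : ℝ := sInf {t : ℝ | a ≤ F t}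

/-- Right generalized inverse. -/
noncomputable def rightInv (F : ℝ → ℝ) (a : ℝ) : ℝ := sInf {t : ℝ | a < F t}

section cdf
variable (P : Measure ℝ) [IsProbabilityMeasure P]

lemma mcdf_eq_cdf : mcdf P = ProbabilityTheory.cdf P := by
  funext t; rw [mcdf, ProbabilityTheory.cdf_eq_real, measureReal_def]

lemma mcdf_mono : Monotone (mcdf P) := by
  rw [mcdf_eq_cdf]; exact (ProbabilityTheory.cdf P).mono

lemma mcdf_nonneg (t : ℝ) : 0 ≤ mcdf P t := ENNReal.toReal_nonneg

lemma mcdf_le_one (t : ℝ) : mcdf P t ≤ 1 := by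
  rw [mcdf]
  have := prob_le_one (μ := P) (s := Iic t)
  simpa using ENNReal.toReal_mono ENNReal.one_ne_top this

lemma P_Iic_eq (t : ℝ) : P (Iic t) = ENNReal.ofReal (mcdf P t) := by
  rw [mcdf, ENNReal.ofReal_toReal (measure_ne_top P _)]

lemma P_Ioi_eq (t : ℝ) : P (Ioi t) = ENNReal.ofReal (1 - mcdf P t) := by
  have h1 : Ioi t = (Iic t)ᶜ := by simp
  rw [h1, prob_compl_eq_one_sub measurableSet_Iic, P_Iic_eq,
    ← ENNReal.ofReal_one, ← ENNReal.ofReal_sub _ (mcdf_nonneg P t)]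

lemma exists_mcdf_lt {u : ℝ} (hu : 0 < u) : ∃ t, mcdf P t < u := by
  have := (mcdf_eq_cdf P ▸ ProbabilityTheory.tendsto_cdf_atBot P).eventually_lt_const hu
  exact this.exists

lemma exists_le_mcdf {u : ℝ} (hu : u < 1) : ∃ t, u ≤ mcdf P t := by
  have := (mcdf_eq_cdf P ▸ ProbabilityTheory.tendsto_cdf_atTop P).eventually_const_lt hu
  exact this.exists.imp fun t ht => ht.le

lemma bddBelow_lt {u : ℝ} (hu : 0 < u) : BddBelow {t | u < mcdf P t} := by
  obtain ⟨t0, ht0⟩ := exists_mcdf_lt P hu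
  refine ⟨t0, fun s hs => ?_⟩
  by_contra h
  have : mcdf P s ≤ mcdf P t0 := mcdf_mono P (le_of_not_ge h)
  simp only [mem_setOf_eq] at hs
  linarith

lemma bddBelow_le {u : ℝ} (hu : 0 < u) : BddBelow {t | u ≤ mcdf P t} := by
  obtain ⟨t0, ht0⟩ := exists_mcdf_lt P hu
  refine ⟨t0, fun s hs => ?_⟩
  by_contra h
  have : mcdf P s ≤ mcdf P t0 := mcdf_mono P (le_of_not_ge h)
  simp only [mem_setOf_eq] at hs
  linarith

lemma galois {u t : ℝ} (hu : u ∈ Ioo (0:ℝ) 1) : leftInv (mcdf P) u ≤ t ↔ u ≤ mcdf P t := by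
  constructor
  · intro h
    have hne : {s | u ≤ mcdf P s}.Nonempty := exists_le_mcdf P hu.2
    -- u ≤ mcdf P t' for all t' > leftInv
    have key : ∀ t', leftInv (mcdf P) u < t' → u ≤ mcdf P t' := by
      intro t' ht'
      obtain ⟨s, hs, hst⟩ := (csInf_lt_iff (bddBelow_le P hu.1) hne).mp ht'
      exact le_trans hs (mcdf_mono P hst.le)
    -- right continuity at a := leftInv
    set a := leftInv (mcdf P) u
    have hrc : ContinuousWithinAt (ProbabilityTheory.cdf P) (Ioi a) a :=
      ((ProbabilityTheory.cdf P).right_continuous a).mono Ioi_subset_Ici_self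
    have hae : u ≤ mcdf P a := by
      rw [mcdf_eq_cdf]
      refine ge_of_tendsto hrc ?_
      filter_upwards [self_mem_nhdsWithin] with t' ht'
      rw [← mcdf_eq_cdf]
      exact key t' ht'
    exact le_trans hae (mcdf_mono P h)
  · intro h
    exact csInf_le (bddBelow_le P hu.1) h

lemma galois_neg {u t : ℝ} (hu : u ∈ Ioo (0:ℝ) 1) :
    t < leftInv (mcdf P) u ↔ mcdf P t < u := by
  rw [← not_le, ← not_le, galois P hu]

end cdf

-- quantile section
noncomputable def qf (P : Measure ℝ) : ℝ → ℝ :=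
  (Set.Ioo (0:ℝ) 1).piecewise (leftInv (mcdf P)) 0

section qf
variable (P : Measure ℝ) [IsProbabilityMeasure P]

lemma qf_eqOn : EqOn (qf P) (leftInv (mcdf P)) (Ioo (0:ℝ) 1) :=
  fun u hu => Set.piecewise_eq_of_mem _ _ _ hu

lemma qf_galois {u t : ℝ} (hu : u ∈ Ioo (0:ℝ) 1) : qf P u ≤ t ↔ u ≤ mcdf P t := by
  rw [qf_eqOn P hu]; exact galois P hu

lemma qf_galois_neg {u t : ℝ} (hu : u ∈ Ioo (0:ℝ) 1) : t < qf P u ↔ mcdf P t < u := by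
  rw [← not_le, ← not_le, qf_galois P hu]

lemma qf_preimage_Iic (t : ℝ) :
    qf P ⁻¹' (Iic t) = (Ioo (0:ℝ) 1 ∩ Iic (mcdf P t)) ∪ ((Ioo (0:ℝ) 1)ᶜ ∩ {u | (0:ℝ) ≤ t}) := by
  ext u
  by_cases hu : u ∈ Ioo (0:ℝ) 1
  · simp only [mem_preimage, mem_Iic, mem_union, mem_inter_iff, hu, mem_compl_iff,
      not_true_eq_false, false_and, or_false, true_and, mem_setOf_eq]
    rw [qf_galois P hu]
  · simp only [mem_preimage, mem_Iic, mem_union, mem_inter_iff, hu, false_and, false_or,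
      mem_compl_iff, not_false_eq_true, true_and, mem_setOf_eq]
    have : qf P u = 0 := Set.piecewise_eq_of_notMem _ _ _ hu
    rw [this]

lemma qf_measurable : Measurable (qf P) := by
  refine measurable_of_Iic fun t => ?_
  rw [qf_preimage_Iic]
  have h2 : MeasurableSet {u : ℝ | (0:ℝ) ≤ t} := by
    by_cases h : (0:ℝ) ≤ t
    · simp [h, MeasurableSet.univ]
    · simp [h]
  exact ((measurableSet_Ioo.inter measurableSet_Iic).union
    (measurableSet_Ioo.compl.inter h2))

lemma map_qf : (volume.restrict (Ioo (0:ℝ) 1)).map (qf P) = P := by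
  have hfin : IsFiniteMeasure ((volume.restrict (Ioo (0:ℝ) 1)).map (qf P)) := by
    constructor
    rw [Measure.map_apply (qf_measurable P) MeasurableSet.univ]
    simp [Real.volume_Ioo]
  refine Measure.ext_of_Iic _ _ fun t => ?_
  rw [Measure.map_apply (qf_measurable P) measurableSet_Iic, qf_preimage_Iic,
    Measure.restrict_apply' measurableSet_Ioo, P_Iic_eq]
  set M := mcdf P t with hM
  have hM0 : 0 ≤ M := mcdf_nonneg P t
  have hM1 : M ≤ 1 := mcdf_le_one P t
  have hset : ((Ioo (0:ℝ) 1 ∩ Iic M) ∪ ((Ioo (0:ℝ) 1)ᶜ ∩ {u | (0:ℝ) ≤ t})) ∩ Ioo (0:ℝ) 1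
      = Ioo (0:ℝ) 1 ∩ Iic M := by
    ext u
    simp only [mem_inter_iff, mem_union, mem_compl_iff, mem_setOf_eq]
    tauto
  rw [hset]
  rcases eq_or_lt_of_le hM1 with h | h
  · have : Ioo (0:ℝ) 1 ∩ Iic M = Ioo (0:ℝ) 1 := by
      rw [inter_eq_left]
      intro u hu
      rw [mem_Iic, h]
      exact hu.2.le
    rw [this, Real.volume_Ioo, h]
    norm_num
  · have : Ioo (0:ℝ) 1 ∩ Iic M = Ioc (0:ℝ) M := by
      ext u
      simp only [mem_inter_iff, mem_Ioo, mem_Iic, mem_Ioc]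
      constructor
      · rintro ⟨⟨h1, _⟩, h2⟩; exact ⟨h1, h2⟩
      · rintro ⟨h1, h2⟩; exact ⟨⟨h1, lt_of_le_of_lt h2 h⟩, h2⟩
    rw [this, Real.volume_Ioc]
    norm_num

end qf

section leftright
variable (P : Measure ℝ) [IsProbabilityMeasure P]

lemma nonempty_lt_set {u : ℝ} (hu : u ∈ Ioo (0:ℝ) 1) : {t : ℝ | u < mcdf P t}.Nonempty := by
  obtain ⟨t, ht⟩ := exists_le_mcdf P (show (u+1)/2 < 1 by linarith [hu.2])
  refine ⟨t, ?_⟩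
  simp only [mem_setOf_eq]
  linarith [hu.2]

lemma leftInv_le_rightInv {u : ℝ} (hu : u ∈ Ioo (0:ℝ) 1) :
    leftInv (mcdf P) u ≤ rightInv (mcdf P) u := by
  refine csInf_le_csInf (bddBelow_le P hu.1) (nonempty_lt_set P hu) ?_
  intro t ht
  simp only [mem_setOf_eq] at ht ⊢
  exact ht.le

lemma rightInv_le_leftInv {u v : ℝ} (hu : 0 < u) (huv : u < v) (hv : v < 1) :
    rightInv (mcdf P) u ≤ leftInv (mcdf P) v := by
  refine csInf_le_csInf ?_ (exists_le_mcdf P hv) ?_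
  · exact bddBelow_lt P hu
  · intro t ht
    simp only [mem_setOf_eq] at ht ⊢
    linarith

lemma ae_leftInv_eq_rightInv :
    ∀ᵐ u ∂(volume.restrict (Ioo (0:ℝ) 1)), leftInv (mcdf P) u = rightInv (mcdf P) u := by
  set D := {u | u ∈ Ioo (0:ℝ) 1 ∧ leftInv (mcdf P) u < rightInv (mcdf P) u} with hD
  have hcount : D.Countable := by
    have hex : ∀ u ∈ D, ∃ q : ℚ, leftInv (mcdf P) u < (q:ℝ) ∧ (q:ℝ) < rightInv (mcdf P) u := by
      intro u hu
      exact exists_rat_btwn hu.2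
    choose φ hφ1 hφ2 using hex
    have hinj : ∀ (u : ℝ) (hu : u ∈ D) (v : ℝ) (hv : v ∈ D), u < v →
        (φ u hu : ℝ) < (φ v hv : ℝ) := by
      intro u hu v hv huv
      calc (φ u hu : ℝ) < rightInv (mcdf P) u := hφ2 u hu
        _ ≤ leftInv (mcdf P) v := rightInv_le_leftInv P hu.1.1 huv hv.1.2
        _ < (φ v hv : ℝ) := hφ1 v hv
    rw [← Set.countable_coe_iff]
    have hI : Function.Injective (fun u : D => φ u.1 u.2) := by
      rintro ⟨u, hu⟩ ⟨v, hv⟩ h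
      simp only at h
      rcases lt_trichotomy u v with hlt | heq | hgt
      · have := hinj u hu v hv hlt
        rw [h] at this
        exact absurd this (lt_irrefl _)
      · exact Subtype.ext heq
      · have := hinj v hv u hu hgt
        rw [h] at this
        exact absurd this (lt_irrefl _)
    exact Function.Injective.countable hI
  have hnull : volume D = 0 := hcount.measure_zero _
  have hae : ∀ᵐ u ∂(volume : Measure ℝ), u ∉ D := by
    rw [ae_iff]
    simpa using hnull
  rw [ae_restrict_iff' measurableSet_Ioo]
  filter_upwards [hae] with u hu hmem
  simp only [hD, mem_setOf_eq, not_and, not_lt] at hu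
  exact le_antisymm (leftInv_le_rightInv P hmem) (hu hmem)

end leftright

-- J function
noncomputable def Jfun (x s : ℝ) : ℝ := (if s < x then 1 else 0) - (if s < 0 then 1 else 0)

lemma Jfun_eq_pos {x : ℝ} (hx : 0 ≤ x) :
    Jfun x = (Ico (0:ℝ) x).indicator (1 : ℝ → ℝ) := by
  funext s
  simp only [Jfun, indicator, mem_Ico]
  split_ifs <;> first | rfl | ring_nf | (exfalso; try linarith)
  all_goals simp_all; try linarith

lemma Jfun_eq_neg {x : ℝ} (hx : x < 0) :
    Jfun x = fun s => -((Ico x (0:ℝ)).indicator (1 : ℝ → ℝ) s) := by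
  funext s
  simp only [Jfun, indicator, mem_Ico]
  split_ifs <;> first | rfl | ring_nf | (exfalso; try linarith)
  all_goals simp_all; try linarith

lemma integrable_Jfun (x : ℝ) : Integrable (Jfun x) volume := by
  rcases le_or_gt 0 x with hx | hx
  · rw [Jfun_eq_pos hx]
    rw [integrable_indicator_iff measurableSet_Ico]
    refine integrableOn_const (ne_of_lt ?_)
    rw [Real.volume_Ico]
    exact ENNReal.ofReal_lt_top
  · rw [Jfun_eq_neg hx]
    refine Integrable.neg ?_
    rw [integrable_indicator_iff measurableSet_Ico]
    refine integrableOn_const (ne_of_lt ?_)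
    rw [Real.volume_Ico]
    exact ENNReal.ofReal_lt_top

lemma integral_Jfun (x : ℝ) : ∫ s, Jfun x s = x := by
  rcases le_or_gt 0 x with hx | hx
  · rw [Jfun_eq_pos hx]
    rw [MeasureTheory.integral_indicator_one measurableSet_Ico, measureReal_def, Real.volume_Ico,
      ENNReal.toReal_ofReal (by linarith)]
    linarith
  · rw [Jfun_eq_neg hx]
    rw [integral_neg, MeasureTheory.integral_indicator_one measurableSet_Ico, measureReal_def, Real.volume_Ico,
      ENNReal.toReal_ofReal (by linarith)]
    linarith

lemma integral_abs_Jfun (x : ℝ) : ∫ s, |Jfun x s| = |x| := by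
  rcases le_or_gt 0 x with hx | hx
  · have : (fun s => |Jfun x s|) = (Ico (0:ℝ) x).indicator (1 : ℝ → ℝ) := by
      rw [Jfun_eq_pos hx]
      funext s
      simp only [indicator]
      split_ifs <;> simp
    rw [this, MeasureTheory.integral_indicator_one measurableSet_Ico, measureReal_def, Real.volume_Ico,
      ENNReal.toReal_ofReal (by linarith), abs_of_nonneg hx]
    linarith
  · have : (fun s => |Jfun x s|) = (Ico x (0:ℝ)).indicator (1 : ℝ → ℝ) := by
      rw [Jfun_eq_neg hx]
      funext s
      simp only [indicator]
      split_ifs <;> simp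
    rw [this, MeasureTheory.integral_indicator_one measurableSet_Ico, measureReal_def, Real.volume_Ico,
      ENNReal.toReal_ofReal (by linarith), abs_of_neg hx]
    linarith

lemma measurable_Jfun_uncurry : Measurable (fun q : ℝ × ℝ => Jfun q.1 q.2) := by
  unfold Jfun
  refine Measurable.sub ?_ ?_
  · exact Measurable.ite (measurableSet_lt measurable_snd measurable_fst)
      measurable_const measurable_const
  · exact Measurable.ite (measurableSet_lt measurable_snd measurable_const)
      measurable_const measurable_const

lemma measurable_K : Measurable (fun q : (ℝ × ℝ) × (ℝ × ℝ) =>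
    Jfun q.1.1 q.2.1 * Jfun q.1.2 q.2.2) := by
  refine Measurable.mul ?_ ?_
  · exact measurable_Jfun_uncurry.comp (measurable_fst.fst.prodMk measurable_snd.fst)
  · exact measurable_Jfun_uncurry.comp (measurable_fst.snd.prodMk measurable_snd.snd)

section coupling
variable {P Q : Measure ℝ} [IsProbabilityMeasure P] [IsProbabilityMeasure Q]
variable (π : Measure (ℝ × ℝ)) [IsProbabilityMeasure π]

lemma coupling_int_fst_sq (h1 : π.map Prod.fst = P)
    (hP2 : Integrable (fun x : ℝ => x ^ 2) P) : Integrable (fun p : ℝ × ℝ => p.1 ^ 2) π := by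
  rw [← h1] at hP2
  exact (integrable_map_measure ((continuous_pow 2).aestronglyMeasurable)
    measurable_fst.aemeasurable).mp hP2

lemma coupling_int_snd_sq (h2 : π.map Prod.snd = Q)
    (hQ2 : Integrable (fun x : ℝ => x ^ 2) Q) : Integrable (fun p : ℝ × ℝ => p.2 ^ 2) π := by
  rw [← h2] at hQ2
  exact (integrable_map_measure ((continuous_pow 2).aestronglyMeasurable)
    measurable_snd.aemeasurable).mp hQ2

lemma coupling_int_absmul (h1 : π.map Prod.fst = P) (h2 : π.map Prod.snd = Q)
    (hP2 : Integrable (fun x : ℝ => x ^ 2) P) (hQ2 : Integrable (fun x : ℝ => x ^ 2) Q) :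
    Integrable (fun p : ℝ × ℝ => |p.1| * |p.2|) π := by
  have hsum : Integrable (fun p : ℝ × ℝ => p.1 ^ 2 + p.2 ^ 2) π := by
    exact (coupling_int_fst_sq π h1 hP2).add (coupling_int_snd_sq π h2 hQ2)
  refine hsum.mono' ?_ ?_
  · exact (measurable_fst.abs.mul measurable_snd.abs).aestronglyMeasurable
  · refine ae_of_all _ fun p => ?_
    rw [Real.norm_eq_abs, abs_of_nonneg (mul_nonneg (abs_nonneg _) (abs_nonneg _))]
    nlinarith [sq_nonneg (|p.1| - |p.2|), sq_abs p.1, sq_abs p.2, abs_nonneg p.1, abs_nonneg p.2]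

lemma coupling_int_mul (h1 : π.map Prod.fst = P) (h2 : π.map Prod.snd = Q)
    (hP2 : Integrable (fun x : ℝ => x ^ 2) P) (hQ2 : Integrable (fun x : ℝ => x ^ 2) Q) :
    Integrable (fun p : ℝ × ℝ => p.1 * p.2) π := by
  refine (coupling_int_absmul π h1 h2 hP2 hQ2).mono' ?_ ?_
  · exact (measurable_fst.mul measurable_snd).aestronglyMeasurable
  · exact ae_of_all _ fun p => by rw [Real.norm_eq_abs, abs_mul]

lemma coupling_integral_fst_sq (h1 : π.map Prod.fst = P) :
    ∫ p : ℝ × ℝ, p.1 ^ 2 ∂π = ∫ x, x ^ 2 ∂P := by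
  rw [← h1, integral_map measurable_fst.aemeasurable (continuous_pow 2).aestronglyMeasurable]

lemma coupling_integral_snd_sq (h2 : π.map Prod.snd = Q) :
    ∫ p : ℝ × ℝ, p.2 ^ 2 ∂π = ∫ x, x ^ 2 ∂Q := by
  rw [← h2, integral_map measurable_snd.aemeasurable (continuous_pow 2).aestronglyMeasurable]

lemma coupling_cost_decomp (h1 : π.map Prod.fst = P) (h2 : π.map Prod.snd = Q)
    (hP2 : Integrable (fun x : ℝ => x ^ 2) P) (hQ2 : Integrable (fun x : ℝ => x ^ 2) Q) :
    ∫ p, (p.1 - p.2) ^ 2 ∂π =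
      (∫ x, x ^ 2 ∂P) + (∫ x, x ^ 2 ∂Q) - 2 * ∫ p : ℝ × ℝ, p.1 * p.2 ∂π := by
  have hfs := coupling_int_fst_sq π h1 hP2
  have hss := coupling_int_snd_sq π h2 hQ2
  have hm := coupling_int_mul π h1 h2 hP2 hQ2
  calc ∫ p, (p.1 - p.2) ^ 2 ∂π
      = ∫ p : ℝ × ℝ, (p.1 ^ 2 + p.2 ^ 2 - 2 * (p.1 * p.2)) ∂π := by
        congr 1; funext p; ring
    _ = (∫ p : ℝ × ℝ, p.1 ^ 2 ∂π) + (∫ p : ℝ × ℝ, p.2 ^ 2 ∂π)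
          - 2 * ∫ p : ℝ × ℝ, p.1 * p.2 ∂π := by
        have hsum : Integrable (fun p : ℝ × ℝ => p.1 ^ 2 + p.2 ^ 2) π := by
          exact hfs.add hss
        have hm2 : Integrable (fun p : ℝ × ℝ => 2 * (p.1 * p.2)) π := by
          exact hm.const_mul 2
        rw [integral_sub hsum hm2, integral_add hfs hss, integral_const_mul _ _]
    _ = _ := by rw [coupling_integral_fst_sq π h1, coupling_integral_snd_sq π h2]

lemma coupling_measure_fst (h1 : π.map Prod.fst = P) (s : ℝ) :
    π (Prod.fst ⁻¹' Ioi s) = P (Ioi s) := by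
  rw [← h1, Measure.map_apply measurable_fst measurableSet_Ioi]

lemma coupling_measure_snd (h2 : π.map Prod.snd = Q) (t : ℝ) :
    π (Prod.snd ⁻¹' Ioi t) = Q (Ioi t) := by
  rw [← h2, Measure.map_apply measurable_snd measurableSet_Ioi]

lemma coupling_U_le (h1 : π.map Prod.fst = P) (h2 : π.map Prod.snd = Q) (s t : ℝ) :
    π (Ioi s ×ˢ Ioi t) ≤ min (P (Ioi s)) (Q (Ioi t)) := by
  refine le_min ?_ ?_
  · rw [← coupling_measure_fst π h1 s]
    exact measure_mono fun p hp => hp.1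
  · rw [← coupling_measure_snd π h2 t]
    exact measure_mono fun p hp => hp.2

lemma hoeffding_pointwise (h1 : π.map Prod.fst = P) (h2 : π.map Prod.snd = Q) (s t : ℝ) :
    ∫ p : ℝ × ℝ, Jfun p.1 s * Jfun p.2 t ∂π =
      (π (Ioi s ×ˢ Ioi t)).toReal
        - (if t < 0 then (1:ℝ) else 0) * (P (Ioi s)).toReal
        - (if s < 0 then (1:ℝ) else 0) * (Q (Ioi t)).toReal
        + (if s < 0 then (1:ℝ) else 0) * (if t < 0 then (1:ℝ) else 0) := by
  set a : ℝ := if s < 0 then 1 else 0 with ha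
  set b : ℝ := if t < 0 then 1 else 0 with hb
  have hmU : MeasurableSet (Ioi s ×ˢ Ioi t : Set (ℝ × ℝ)) :=
    measurableSet_Ioi.prod measurableSet_Ioi
  have hmF : MeasurableSet (Prod.fst ⁻¹' Ioi s : Set (ℝ × ℝ)) :=
    measurable_fst measurableSet_Ioi
  have hmS : MeasurableSet (Prod.snd ⁻¹' Ioi t : Set (ℝ × ℝ)) :=
    measurable_snd measurableSet_Ioi
  have hpt : (fun p : ℝ × ℝ => Jfun p.1 s * Jfun p.2 t) = fun p =>
      (Ioi s ×ˢ Ioi t).indicator (1 : ℝ × ℝ → ℝ) p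
        - b * (Prod.fst ⁻¹' Ioi s).indicator (1 : ℝ × ℝ → ℝ) p
        - a * (Prod.snd ⁻¹' Ioi t).indicator (1 : ℝ × ℝ → ℝ) p + a * b := by
    funext p
    by_cases hx : s < p.1 <;> by_cases hy : t < p.2 <;>
      simp [Jfun, Set.indicator_apply, Set.mem_prod, mem_Ioi, mem_preimage, hx, hy, ha, hb] <;>
      split_ifs <;> ring
  have hint : ∀ (A : Set (ℝ × ℝ)), MeasurableSet A →
      Integrable (A.indicator (1 : ℝ × ℝ → ℝ)) π := by
    intro A hA
    rw [integrable_indicator_iff hA]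
    exact integrableOn_const (measure_ne_top π A)
  have i2 : Integrable (fun p : ℝ × ℝ => b * (Prod.fst ⁻¹' Ioi s).indicator (1 : ℝ × ℝ → ℝ) p) π := by
    exact (hint _ hmF).const_mul b
  have i3 : Integrable (fun p : ℝ × ℝ => a * (Prod.snd ⁻¹' Ioi t).indicator (1 : ℝ × ℝ → ℝ) p) π := by
    exact (hint _ hmS).const_mul a
  have i12 : Integrable (fun p : ℝ × ℝ => (Ioi s ×ˢ Ioi t).indicator (1 : ℝ × ℝ → ℝ) p
      - b * (Prod.fst ⁻¹' Ioi s).indicator (1 : ℝ × ℝ → ℝ) p) π := by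
    exact (hint _ hmU).sub i2
  have i123 : Integrable (fun p : ℝ × ℝ => (Ioi s ×ˢ Ioi t).indicator (1 : ℝ × ℝ → ℝ) p
      - b * (Prod.fst ⁻¹' Ioi s).indicator (1 : ℝ × ℝ → ℝ) p
      - a * (Prod.snd ⁻¹' Ioi t).indicator (1 : ℝ × ℝ → ℝ) p) π := by
    exact i12.sub i3
  rw [hpt, integral_add i123 (integrable_const _),
    integral_sub i12 i3,
    integral_sub (hint _ hmU) i2,
    integral_const_mul _ _, integral_const_mul _ _, integral_const,
    MeasureTheory.integral_indicator_one hmU, MeasureTheory.integral_indicator_one hmF,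
    MeasureTheory.integral_indicator_one hmS,
    measureReal_def π (Ioi s ×ˢ Ioi t), measureReal_def π (Prod.fst ⁻¹' Ioi s),
    measureReal_def π (Prod.snd ⁻¹' Ioi t),
    coupling_measure_fst π h1 s, coupling_measure_snd π h2 t]
  simp [measure_univ]

end coupling

section fubini
variable {P Q : Measure ℝ} [IsProbabilityMeasure P] [IsProbabilityMeasure Q]
variable (π : Measure (ℝ × ℝ)) [IsProbabilityMeasure π]

noncomputable def Kfun : (ℝ × ℝ) × (ℝ × ℝ) → ℝ := fun q => Jfun q.1.1 q.2.1 * Jfun q.1.2 q.2.2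

lemma K_integrable (h1 : π.map Prod.fst = P) (h2 : π.map Prod.snd = Q)
    (hP2 : Integrable (fun x : ℝ => x ^ 2) P) (hQ2 : Integrable (fun x : ℝ => x ^ 2) Q) :
    Integrable Kfun (π.prod (volume.prod volume)) := by
  have hmeas : AEStronglyMeasurable Kfun (π.prod (volume.prod volume)) :=
    measurable_K.aestronglyMeasurable
  refine (integrable_prod_iff hmeas).mpr ⟨?_, ?_⟩
  · refine ae_of_all _ fun p => ?_
    exact (integrable_Jfun p.1).mul_prod (integrable_Jfun p.2)
  · have hxy : (fun p : ℝ × ℝ => ∫ z : ℝ × ℝ, ‖Kfun (p, z)‖ ∂(volume.prod volume))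
        = fun p : ℝ × ℝ => |p.1| * |p.2| := by
      funext p
      have habs : (fun z : ℝ × ℝ => ‖Kfun (p, z)‖)
          = fun z : ℝ × ℝ => |Jfun p.1 z.1| * |Jfun p.2 z.2| := by
        funext z
        rw [Kfun, Real.norm_eq_abs, abs_mul]
      rw [habs, integral_prod_mul (fun s => |Jfun p.1 s|) (fun t => |Jfun p.2 t|),
        integral_abs_Jfun, integral_abs_Jfun]
    rw [hxy]
    exact coupling_int_absmul π h1 h2 hP2 hQ2

lemma hoeffding_repr (h1 : π.map Prod.fst = P) (h2 : π.map Prod.snd = Q)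
    (hP2 : Integrable (fun x : ℝ => x ^ 2) P) (hQ2 : Integrable (fun x : ℝ => x ^ 2) Q) :
    ∫ p : ℝ × ℝ, p.1 * p.2 ∂π =
      ∫ z : ℝ × ℝ, (∫ p : ℝ × ℝ, Jfun p.1 z.1 * Jfun p.2 z.2 ∂π) ∂(volume.prod volume) := by
  have hK := K_integrable π h1 h2 hP2 hQ2
  have hswap := integral_integral_swap
    (f := fun (p z : ℝ × ℝ) => Jfun p.1 z.1 * Jfun p.2 z.2)
    (μ := π) (ν := volume.prod volume) (by exact hK)
  calc ∫ p : ℝ × ℝ, p.1 * p.2 ∂π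
      = ∫ p : ℝ × ℝ, ∫ z : ℝ × ℝ, Jfun p.1 z.1 * Jfun p.2 z.2 ∂(volume.prod volume) ∂π := by
        congr 1
        funext p
        rw [integral_prod_mul (Jfun p.1) (Jfun p.2), integral_Jfun, integral_Jfun]
    _ = _ := hswap

lemma inner_integrable (h1 : π.map Prod.fst = P) (h2 : π.map Prod.snd = Q)
    (hP2 : Integrable (fun x : ℝ => x ^ 2) P) (hQ2 : Integrable (fun x : ℝ => x ^ 2) Q) :
    Integrable (fun z : ℝ × ℝ => ∫ p : ℝ × ℝ, Jfun p.1 z.1 * Jfun p.2 z.2 ∂π)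
      (volume.prod volume) := by
  exact (K_integrable π h1 h2 hP2 hQ2).integral_prod_right

lemma integral_mul_le_of_U_le (π' : Measure (ℝ × ℝ)) [IsProbabilityMeasure π']
    (h1 : π.map Prod.fst = P) (h2 : π.map Prod.snd = Q)
    (h1' : π'.map Prod.fst = P) (h2' : π'.map Prod.snd = Q)
    (hP2 : Integrable (fun x : ℝ => x ^ 2) P) (hQ2 : Integrable (fun x : ℝ => x ^ 2) Q)
    (hU : ∀ s t : ℝ, π (Ioi s ×ˢ Ioi t) ≤ π' (Ioi s ×ˢ Ioi t)) :
    ∫ p : ℝ × ℝ, p.1 * p.2 ∂π ≤ ∫ p : ℝ × ℝ, p.1 * p.2 ∂π' := by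
  rw [hoeffding_repr π h1 h2 hP2 hQ2, hoeffding_repr π' h1' h2' hP2 hQ2]
  refine integral_mono (inner_integrable π h1 h2 hP2 hQ2)
    (inner_integrable π' h1' h2' hP2 hQ2) fun z => ?_
  simp only
  rw [hoeffding_pointwise π h1 h2 z.1 z.2, hoeffding_pointwise π' h1' h2' z.1 z.2]
  have h := ENNReal.toReal_mono (measure_ne_top π' _) (hU z.1 z.2)
  linarith

end fubini

section monocoupling
variable (P Q : Measure ℝ) [IsProbabilityMeasure P] [IsProbabilityMeasure Q]

instance : IsProbabilityMeasure (volume.restrict (Ioo (0:ℝ) 1)) := by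
  constructor
  rw [Measure.restrict_apply MeasurableSet.univ, univ_inter, Real.volume_Ioo]
  norm_num

noncomputable def monoC : Measure (ℝ × ℝ) :=
  (volume.restrict (Ioo (0:ℝ) 1)).map (fun u => (qf P u, qf Q u))

lemma monoC_pair_measurable : Measurable (fun u => (qf P u, qf Q u)) :=
  (qf_measurable P).prodMk (qf_measurable Q)

instance : IsProbabilityMeasure (monoC P Q) :=
  Measure.isProbabilityMeasure_map (monoC_pair_measurable P Q).aemeasurable

lemma monoC_fst : (monoC P Q).map Prod.fst = P := by
  rw [monoC, Measure.map_map measurable_fst (monoC_pair_measurable P Q)]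
  exact map_qf P

lemma monoC_snd : (monoC P Q).map Prod.snd = Q := by
  rw [monoC, Measure.map_map measurable_snd (monoC_pair_measurable P Q)]
  exact map_qf Q

lemma monoC_U (s t : ℝ) :
    monoC P Q (Ioi s ×ˢ Ioi t) = min (P (Ioi s)) (Q (Ioi t)) := by
  rw [monoC, Measure.map_apply (monoC_pair_measurable P Q)
    (measurableSet_Ioi.prod measurableSet_Ioi),
    Measure.restrict_apply' measurableSet_Ioo]
  set M := max (mcdf P s) (mcdf Q t) with hM
  have hM0 : 0 ≤ M := le_trans (mcdf_nonneg P s) (le_max_left _ _)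
  have hset : (fun u => (qf P u, qf Q u)) ⁻¹' (Ioi s ×ˢ Ioi t) ∩ Ioo (0:ℝ) 1
      = Ioo M 1 := by
    ext u
    simp only [mem_inter_iff, mem_preimage, mem_prod, mem_Ioi, mem_Ioo]
    constructor
    · rintro ⟨⟨hs, ht⟩, hu⟩
      have h1 := (qf_galois_neg P (u := u) (t := s) ⟨hu.1, hu.2⟩).mp hs
      have h2 := (qf_galois_neg Q (u := u) (t := t) ⟨hu.1, hu.2⟩).mp ht
      exact ⟨max_lt h1 h2, hu.2⟩
    · rintro ⟨hMu, hu1⟩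
      have hu : u ∈ Ioo (0:ℝ) 1 := ⟨lt_of_le_of_lt hM0 hMu, hu1⟩
      rw [hM] at hMu
      refine ⟨⟨?_, ?_⟩, hu⟩
      · exact (qf_galois_neg P hu).mpr (lt_of_le_of_lt (le_max_left _ _) hMu)
      · exact (qf_galois_neg Q hu).mpr (lt_of_le_of_lt (le_max_right _ _) hMu)
  rw [hset, Real.volume_Ioo, P_Ioi_eq, P_Ioi_eq]
  rcases le_total (mcdf P s) (mcdf Q t) with h | h
  · rw [hM, max_eq_right h, min_eq_right (ENNReal.ofReal_le_ofReal (by linarith))]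
  · rw [hM, max_eq_left h, min_eq_left (ENNReal.ofReal_le_ofReal (by linarith))]

lemma monoC_cost :
    ∫ p, (p.1 - p.2) ^ 2 ∂(monoC P Q) =
      ∫ u in Ioo (0:ℝ) 1, (qf P u - qf Q u) ^ 2 := by
  rw [monoC, integral_map (monoC_pair_measurable P Q).aemeasurable (f := fun p : ℝ × ℝ => (p.1 - p.2) ^ 2)
    ((continuous_fst.sub continuous_snd).pow 2).aestronglyMeasurable]

lemma coupling_mul_le_monoC (π : Measure (ℝ × ℝ)) [IsProbabilityMeasure π]
    (h1 : π.map Prod.fst = P) (h2 : π.map Prod.snd = Q)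
    (hP2 : Integrable (fun x : ℝ => x ^ 2) P) (hQ2 : Integrable (fun x : ℝ => x ^ 2) Q) :
    ∫ p : ℝ × ℝ, p.1 * p.2 ∂π ≤ ∫ p : ℝ × ℝ, p.1 * p.2 ∂(monoC P Q) := by
  refine integral_mul_le_of_U_le π (monoC P Q) h1 h2 (monoC_fst P Q) (monoC_snd P Q)
    hP2 hQ2 fun s t => ?_
  rw [monoC_U P Q s t]
  exact coupling_U_le π h1 h2 s t

lemma coupling_cost_ge (π : Measure (ℝ × ℝ)) [IsProbabilityMeasure π]
    (h1 : π.map Prod.fst = P) (h2 : π.map Prod.snd = Q)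
    (hP2 : Integrable (fun x : ℝ => x ^ 2) P) (hQ2 : Integrable (fun x : ℝ => x ^ 2) Q) :
    ∫ u in Ioo (0:ℝ) 1, (qf P u - qf Q u) ^ 2 ≤ ∫ p, (p.1 - p.2) ^ 2 ∂π := by
  rw [← monoC_cost P Q,
    coupling_cost_decomp π h1 h2 hP2 hQ2,
    coupling_cost_decomp (monoC P Q) (monoC_fst P Q) (monoC_snd P Q) hP2 hQ2]
  have := coupling_mul_le_monoC P Q π h1 h2 hP2 hQ2
  linarith

end monocoupling

/-- Squared 2-Wasserstein distance, as the infimum of quadratic transport costs over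
couplings of P and Q. -/
noncomputable def W2sq (P Q : Measure ℝ) : ℝ :=
  sInf {c : ℝ | ∃ π : Measure (ℝ × ℝ), IsProbabilityMeasure π ∧
    π.map Prod.fst = P ∧ π.map Prod.snd = Q ∧ c = ∫ p, (p.1 - p.2) ^ 2 ∂π}

/-- On the real line W₂² equals the squared L² distance between quantile functions;
moreover replacing either generalized inverse by its right-continuous version does not
change the value of the integral. -/
theorem W2sq_eq_quantile_integral (P Q : Measure ℝ)
    [IsProbabilityMeasure P] [IsProbabilityMeasure Q]
    (hP2 : Integrable (fun x : ℝ => x ^ 2) P) (hQ2 : Integrable (fun x : ℝ => x ^ 2) Q) :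
    W2sq P Q = (∫ x in Set.Ioo (0:ℝ) 1, (leftInv (mcdf P) x - leftInv (mcdf Q) x) ^ 2) ∧
    (∫ x in Set.Ioo (0:ℝ) 1, (leftInv (mcdf P) x - leftInv (mcdf Q) x) ^ 2) =
      (∫ x in Set.Ioo (0:ℝ) 1, (rightInv (mcdf P) x - leftInv (mcdf Q) x) ^ 2) ∧
    (∫ x in Set.Ioo (0:ℝ) 1, (leftInv (mcdf P) x - leftInv (mcdf Q) x) ^ 2) =
      (∫ x in Set.Ioo (0:ℝ) 1, (leftInv (mcdf P) x - rightInv (mcdf Q) x) ^ 2) ∧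
    (∫ x in Set.Ioo (0:ℝ) 1, (leftInv (mcdf P) x - leftInv (mcdf Q) x) ^ 2) =
      (∫ x in Set.Ioo (0:ℝ) 1, (rightInv (mcdf P) x - rightInv (mcdf Q) x) ^ 2) := by
  have hIq : (∫ x in Set.Ioo (0:ℝ) 1, (leftInv (mcdf P) x - leftInv (mcdf Q) x) ^ 2)
      = ∫ u in Set.Ioo (0:ℝ) 1, (qf P u - qf Q u) ^ 2 := by
    refine setIntegral_congr_fun measurableSet_Ioo fun u hu => ?_
    rw [qf_eqOn P hu, qf_eqOn Q hu]
  have haeP := ae_leftInv_eq_rightInv P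
  have haeQ := ae_leftInv_eq_rightInv Q
  refine ⟨?_, ?_, ?_, ?_⟩
  · rw [hIq]
    set S := {c : ℝ | ∃ π : Measure (ℝ × ℝ), IsProbabilityMeasure π ∧
      π.map Prod.fst = P ∧ π.map Prod.snd = Q ∧ c = ∫ p, (p.1 - p.2) ^ 2 ∂π} with hS
    have hmem : (∫ u in Set.Ioo (0:ℝ) 1, (qf P u - qf Q u) ^ 2) ∈ S :=
      ⟨monoC P Q, inferInstance, monoC_fst P Q, monoC_snd P Q, (monoC_cost P Q).symm⟩
    have hlb : ∀ c ∈ S, (∫ u in Set.Ioo (0:ℝ) 1, (qf P u - qf Q u) ^ 2) ≤ c := by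
      rintro c ⟨π, hπ, h1, h2, rfl⟩
      haveI := hπ
      exact coupling_cost_ge P Q π h1 h2 hP2 hQ2
    exact le_antisymm (csInf_le ⟨_, hlb⟩ hmem) (le_csInf ⟨_, hmem⟩ hlb)
  · refine integral_congr_ae ?_
    filter_upwards [haeP] with u hu
    rw [hu]
  · refine integral_congr_ae ?_
    filter_upwards [haeQ] with u hu
    rw [hu]
  · refine integral_congr_ae ?_
    filter_upwards [haeP, haeQ] with u hu hv
    rw [hu, hv]
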